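/- Let γ ∈ (0,1), n ≥ 1, τ ≥ 0, and let X = (X_1, …, X_n) be a standard Gaussian vector with law N(0, I_n) on a probability space (Ω, P). For every random vector Θ = (Θ_1, …, Θ_n) taking values in ℝⁿ, independent of X, and such that P(|Θ̄_n| ≤ τ) > 0 where Θ̄_n = (Θ_1 + … + Θ_n)/n, one has P(|∑_{i=1}^n (Θ_i + X_i)| > √n · λ_γ(τ√n) ∣ |Θ̄_n| ≤ τ) ≤ γ. (The RDT test T^RDT_n has level γ for the mean testing problem.) -/

import Mathlib

open MeasureTheory ProbabilityTheory Real Filter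

open scoped NNReal ENNReal

/-- The cumulative distribution function `Φ` of the standard normal law `N(0,1)`. -/
noncomputable def Phi (x : ℝ) : ℝ := ((gaussianReal 0 1) (Set.Iic x)).toReal

/-- The inverse `Φ⁻¹` of the standard normal cdf (on `(0,1)`). -/
noncomputable def PhiInv (y : ℝ) : ℝ := Function.invFun Phi y

lemma integral_gaussian_shift (a b : ℝ) :
    ∫ x : ℝ, Real.exp (-(a * (x - b)^2)) = Real.sqrt (π / a) := by
  rw [← integral_gaussian a, ← integral_sub_right_eq_self (fun x => Real.exp (-a * x^2)) b]
  simp [neg_mul]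

lemma gauss_prod_eq {v₁ v₂ : ℝ≥0} (h₁ : v₁ ≠ 0) (h₂ : v₂ ≠ 0) (y x : ℝ) :
    gaussianPDFReal 0 v₁ x * gaussianPDFReal x v₂ y
      = ((Real.sqrt (2*π*v₁))⁻¹ * (Real.sqrt (2*π*v₂))⁻¹ * rexp (-y^2/(2*((v₁:ℝ)+v₂)))) *
        rexp (-((((v₁:ℝ)+v₂))/(2*v₁*v₂) * (x - v₁*y/((v₁:ℝ)+v₂))^2)) := by
  have hV₁ : (0:ℝ) < v₁ := lt_of_le_of_ne v₁.coe_nonneg (by exact_mod_cast (Ne.symm h₁))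
  have hV₂ : (0:ℝ) < v₂ := lt_of_le_of_ne v₂.coe_nonneg (by exact_mod_cast (Ne.symm h₂))
  have hV : (0:ℝ) < (v₁:ℝ) + v₂ := by linarith
  simp only [gaussianPDFReal, sub_zero]
  have hexp : rexp (-x^2/(2*(v₁:ℝ))) * rexp (-(y-x)^2/(2*(v₂:ℝ)))
      = rexp (-y^2/(2*((v₁:ℝ)+v₂))) *
        rexp (-((((v₁:ℝ)+v₂))/(2*v₁*v₂) * (x - v₁*y/((v₁:ℝ)+v₂))^2)) := by
    rw [← Real.exp_add, ← Real.exp_add]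
    congr 1
    field_simp
    ring
  calc (√(2*π*(v₁:ℝ)))⁻¹ * rexp (-x^2/(2*(v₁:ℝ))) * ((√(2*π*(v₂:ℝ)))⁻¹ * rexp (-(y-x)^2/(2*(v₂:ℝ))))
      = (√(2*π*(v₁:ℝ)))⁻¹ * (√(2*π*(v₂:ℝ)))⁻¹ * (rexp (-x^2/(2*(v₁:ℝ))) * rexp (-(y-x)^2/(2*(v₂:ℝ)))) := by ring
    _ = _ := by rw [hexp]; ring

lemma gauss_conv_pdfReal {v₁ v₂ : ℝ≥0} (h₁ : v₁ ≠ 0) (h₂ : v₂ ≠ 0) (y : ℝ) :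
    ∫ x : ℝ, gaussianPDFReal 0 v₁ x * gaussianPDFReal x v₂ y
      = gaussianPDFReal 0 (v₁ + v₂) y := by
  have hV₁ : (0:ℝ) < v₁ := lt_of_le_of_ne v₁.coe_nonneg (by exact_mod_cast (Ne.symm h₁))
  have hV₂ : (0:ℝ) < v₂ := lt_of_le_of_ne v₂.coe_nonneg (by exact_mod_cast (Ne.symm h₂))
  have hV : (0:ℝ) < (v₁:ℝ) + v₂ := by linarith
  have ha : (0:ℝ) < ((v₁:ℝ)+v₂)/(2*v₁*v₂) := by positivity
  simp only [gauss_prod_eq h₁ h₂ y]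
  rw [integral_const_mul, integral_gaussian_shift]
  rw [gaussianPDFReal]
  push_cast
  rw [sub_zero]
  rw [mul_assoc, mul_comm (rexp _), ← mul_assoc]
  congr 1
  · -- constants
    rw [← Real.sqrt_inv, ← Real.sqrt_inv, ← Real.sqrt_inv, ← Real.sqrt_mul (by positivity),
      ← Real.sqrt_mul (by positivity)]
    congr 1
    field_simp


lemma meas_joint {v₂ : ℝ≥0} : Measurable (fun p : ℝ × ℝ => gaussianPDF p.1 v₂ p.2) := by
  unfold gaussianPDF gaussianPDFReal
  fun_prop

lemma integrable_gauss_prod {v₁ v₂ : ℝ≥0} (h₁ : v₁ ≠ 0) (h₂ : v₂ ≠ 0) (y : ℝ) :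
    Integrable (fun x => gaussianPDFReal 0 v₁ x * gaussianPDFReal x v₂ y) := by
  have hV₁ : (0:ℝ) < v₁ := lt_of_le_of_ne v₁.coe_nonneg (by exact_mod_cast (Ne.symm h₁))
  have hV₂ : (0:ℝ) < v₂ := lt_of_le_of_ne v₂.coe_nonneg (by exact_mod_cast (Ne.symm h₂))
  have ha : (0:ℝ) < ((v₁:ℝ)+v₂)/(2*v₁*v₂) := by positivity
  simp only [gauss_prod_eq h₁ h₂ y]
  refine Integrable.const_mul ?_ _
  have := (integrable_exp_neg_mul_sq ha).comp_sub_right ((v₁:ℝ)*y/((v₁:ℝ)+v₂))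
  simpa [neg_mul] using this

lemma gaussianReal_conv {v₁ v₂ : ℝ≥0} (h₁ : v₁ ≠ 0) (h₂ : v₂ ≠ 0) :
    Measure.map (fun p : ℝ × ℝ => p.1 + p.2) ((gaussianReal 0 v₁).prod (gaussianReal 0 v₂))
      = gaussianReal 0 (v₁ + v₂) := by
  have h12 : v₁ + v₂ ≠ 0 := by simp [h₁]
  ext s hs
  rw [Measure.map_apply measurable_add hs, Measure.prod_apply (measurable_add hs),
    gaussianReal_apply 0 h12 s]
  have step1 : ∀ x : ℝ, gaussianReal 0 v₂ (Prod.mk x ⁻¹' ((fun p : ℝ×ℝ => p.1+p.2) ⁻¹' s))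
      = ∫⁻ y in s, gaussianPDF x v₂ y := by
    intro x
    have : (Prod.mk x ⁻¹' ((fun p : ℝ×ℝ => p.1+p.2) ⁻¹' s)) = (fun y => x + y) ⁻¹' s := rfl
    rw [this, ← Measure.map_apply (measurable_const_add x) hs, gaussianReal_map_const_add,
      zero_add, gaussianReal_apply x h₂ s]
  simp only [step1]
  have hinner : Measurable (fun x : ℝ => ∫⁻ y in s, gaussianPDF x v₂ y) :=
    Measurable.lintegral_prod_right' (f := fun p : ℝ × ℝ => gaussianPDF p.1 v₂ p.2) meas_joint
  rw [gaussianReal_of_var_ne_zero 0 h₁,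
    lintegral_withDensity_eq_lintegral_mul _ (measurable_gaussianPDF 0 v₁) hinner]
  have step2 : ∀ x : ℝ, (gaussianPDF 0 v₁ * fun x => ∫⁻ y in s, gaussianPDF x v₂ y) x
      = ∫⁻ y in s, gaussianPDF 0 v₁ x * gaussianPDF x v₂ y := by
    intro x
    simp only [Pi.mul_apply]
    exact (lintegral_const_mul _ (measurable_gaussianPDF x v₂)).symm
  simp only [step2]
  rw [lintegral_lintegral_swap (by
    exact ((measurable_gaussianPDF 0 v₁).comp measurable_fst |>.mul meas_joint).aemeasurable)]
  refine setLIntegral_congr_fun hs (fun y _ => ?_)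
  have key : ∫⁻ x, gaussianPDF 0 v₁ x * gaussianPDF x v₂ y = gaussianPDF 0 (v₁+v₂) y := by
    have hnn : 0 ≤ᵐ[volume] fun x => gaussianPDFReal 0 v₁ x * gaussianPDFReal x v₂ y :=
      Filter.Eventually.of_forall fun x =>
        mul_nonneg (gaussianPDFReal_nonneg _ _ _) (gaussianPDFReal_nonneg _ _ _)
    calc ∫⁻ x, gaussianPDF 0 v₁ x * gaussianPDF x v₂ y
        = ∫⁻ x, ENNReal.ofReal (gaussianPDFReal 0 v₁ x * gaussianPDFReal x v₂ y) := by
          simp only [gaussianPDF, ENNReal.ofReal_mul (gaussianPDFReal_nonneg 0 v₁ _)]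
      _ = ENNReal.ofReal (∫ x, gaussianPDFReal 0 v₁ x * gaussianPDFReal x v₂ y) :=
          (ofReal_integral_eq_lintegral_ofReal (integrable_gauss_prod h₁ h₂ y) hnn).symm
      _ = gaussianPDF 0 (v₁+v₂) y := by rw [gauss_conv_pdfReal h₁ h₂ y]; rfl
  exact key

lemma gr_singleton (x : ℝ) : gaussianReal 0 1 {x} = 0 := by
  rw [gaussianReal_apply 0 one_ne_zero]
  exact setLIntegral_measure_zero _ _ (Real.volume_singleton)

lemma Phi_nonneg (x : ℝ) : 0 ≤ Phi x := ENNReal.toReal_nonneg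

lemma Phi_le_one (x : ℝ) : Phi x ≤ 1 := by
  rw [Phi]
  have := prob_le_one (μ := gaussianReal 0 1) (s := Set.Iic x)
  simpa using ENNReal.toReal_mono ENNReal.one_ne_top this

lemma Phi_mono : Monotone Phi := fun a b h =>
  ENNReal.toReal_mono (measure_ne_top _ _) (measure_mono (Set.Iic_subset_Iic.2 h))

lemma ofReal_Phi (x : ℝ) : ENNReal.ofReal (Phi x) = gaussianReal 0 1 (Set.Iic x) :=
  ENNReal.ofReal_toReal (measure_ne_top _ _)

lemma gr_Iio (x : ℝ) : gaussianReal 0 1 (Set.Iio x) = ENNReal.ofReal (Phi x) := by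
  rw [ofReal_Phi]
  refine le_antisymm (measure_mono Set.Iio_subset_Iic_self) ?_
  calc gaussianReal 0 1 (Set.Iic x) ≤ gaussianReal 0 1 (Set.Iio x ∪ {x}) := by
        rw [Set.Iio_union_right]
      _ ≤ gaussianReal 0 1 (Set.Iio x) + gaussianReal 0 1 {x} := measure_union_le _ _
      _ = gaussianReal 0 1 (Set.Iio x) := by rw [gr_singleton, add_zero]

lemma gr_Ioi (x : ℝ) : gaussianReal 0 1 (Set.Ioi x) = ENNReal.ofReal (1 - Phi x) := by
  have h1 : gaussianReal 0 1 (Set.Ioi x) = 1 - gaussianReal 0 1 (Set.Iic x) := by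
    rw [← Set.compl_Iic, measure_compl measurableSet_Iic (measure_ne_top _ _), measure_univ]
  rw [h1, ← ofReal_Phi, ← ENNReal.ofReal_one, ← ENNReal.ofReal_sub _ (Phi_nonneg x)]

lemma gr_map_neg : Measure.map (fun z : ℝ => -1 * z) (gaussianReal 0 1) = gaussianReal 0 1 := by
  rw [gaussianReal_map_const_mul (-1)]
  norm_num

lemma Phi_neg (x : ℝ) : Phi (-x) = 1 - Phi x := by
  have h1 : gaussianReal 0 1 (Set.Iic (-x)) = gaussianReal 0 1 (Set.Ici x) := by
    conv_lhs => rw [← gr_map_neg, Measure.map_apply (by fun_prop) measurableSet_Iic]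
    congr 1
    ext z
    simp only [Set.mem_preimage, Set.mem_Iic, Set.mem_Ici]
    constructor <;> intro h <;> nlinarith
  have h2 : gaussianReal 0 1 (Set.Ici x) = ENNReal.ofReal (1 - Phi x) := by
    have : gaussianReal 0 1 (Set.Ici x) = 1 - gaussianReal 0 1 (Set.Iio x) := by
      rw [← Set.compl_Iio, measure_compl measurableSet_Iio (measure_ne_top _ _), measure_univ]
    rw [this, gr_Iio, ← ENNReal.ofReal_one, ← ENNReal.ofReal_sub _ (Phi_nonneg x)]
  rw [Phi, h1, h2, ENNReal.toReal_ofReal (by linarith [Phi_le_one x])]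

lemma Phi_diff (p q : ℝ) (hpq : p ≤ q) :
    Phi q - Phi p = ∫ x in p..q, gaussianPDFReal 0 1 x := by
  have hsplit : Set.Iic p ∪ Set.Ioc p q = Set.Iic q := Set.Iic_union_Ioc_eq_Iic hpq
  have hdisj : Disjoint (Set.Iic p) (Set.Ioc p q) := Set.Iic_disjoint_Ioc le_rfl
  have hmeas : gaussianReal 0 1 (Set.Iic q)
      = gaussianReal 0 1 (Set.Iic p) + gaussianReal 0 1 (Set.Ioc p q) := by
    rw [← hsplit, measure_union hdisj measurableSet_Ioc]
  have hIoc : gaussianReal 0 1 (Set.Ioc p q)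
      = ENNReal.ofReal (∫ x in Set.Ioc p q, gaussianPDFReal 0 1 x) := by
    rw [gaussianReal_apply 0 one_ne_zero, gaussianPDF_def,
      ← ofReal_integral_eq_lintegral_ofReal ((integrable_gaussianPDFReal 0 1).integrableOn)
        (Filter.Eventually.of_forall fun x => gaussianPDFReal_nonneg 0 1 x)]
  have hint_nonneg : 0 ≤ ∫ x in Set.Ioc p q, gaussianPDFReal 0 1 x :=
    setIntegral_nonneg measurableSet_Ioc fun x _ => gaussianPDFReal_nonneg 0 1 x
  have : Phi q = Phi p + ∫ x in Set.Ioc p q, gaussianPDFReal 0 1 x := by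
    rw [Phi, Phi, hmeas, hIoc, ENNReal.toReal_add (measure_ne_top _ _) (by simp),
      ENNReal.toReal_ofReal hint_nonneg]
  rw [this, intervalIntegral.integral_of_le hpq]
  ring

lemma Phi_sum_anti {lam u a : ℝ} (hlam : 0 ≤ lam) (hu : 0 ≤ u) (hua : u ≤ a) :
    Phi (lam - a) + Phi (lam + a) ≤ Phi (lam - u) + Phi (lam + u) := by
  have key : Phi (lam + a) - Phi (lam + u) ≤ Phi (lam - u) - Phi (lam - a) := by
    rw [Phi_diff _ _ (by linarith), Phi_diff _ _ (by linarith)]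
    have h1 : ∫ x in (lam + u)..(lam + a), gaussianPDFReal 0 1 x
        = ∫ t in u..a, gaussianPDFReal 0 1 (lam + t) := by
      rw [intervalIntegral.integral_comp_add_left (gaussianPDFReal 0 1) lam]
    have h2 : ∫ x in (lam - a)..(lam - u), gaussianPDFReal 0 1 x
        = ∫ t in u..a, gaussianPDFReal 0 1 (lam - t) := by
      rw [intervalIntegral.integral_comp_sub_left (gaussianPDFReal 0 1) lam]
    rw [h1, h2]
    have hcont : Continuous (gaussianPDFReal 0 1) := by
      unfold gaussianPDFReal; fun_prop
    refine intervalIntegral.integral_mono_on hua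
      ((hcont.comp (by fun_prop)).intervalIntegrable u a)
      ((hcont.comp (by fun_prop)).intervalIntegrable u a) fun t ht => ?_
    have ht0 : 0 ≤ t := le_trans hu ht.1
    simp only [gaussianPDFReal, sub_zero, NNReal.coe_one, mul_one]
    have hexp : rexp (-(lam + t)^2 / 2) ≤ rexp (-(lam - t)^2 / 2) := by
      apply Real.exp_le_exp.mpr
      nlinarith
    exact mul_le_mul_of_nonneg_left hexp (by positivity)
  linarith

lemma tail_bound {γ τ lam : ℝ} (hγ : γ ∈ Set.Ioo (0:ℝ) 1) (hτ : 0 ≤ τ) {n : ℕ} (hn : 1 ≤ n)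
    (hlam : 2 - Phi (lam - τ * Real.sqrt n) - Phi (lam + τ * Real.sqrt n) = γ)
    {t : ℝ} (ht : |t| ≤ τ * n) :
    gaussianReal 0 (n : ℝ≥0) {s : ℝ | Real.sqrt n * lam < |t + s|} ≤ ENNReal.ofReal γ := by
  set a : ℝ := τ * Real.sqrt n with ha
  have hn0 : (0:ℝ) < n := by exact_mod_cast hn
  have hsn : (0:ℝ) < Real.sqrt n := Real.sqrt_pos.2 hn0
  have ha0 : 0 ≤ a := mul_nonneg hτ hsn.le
  -- lam nonneg
  have hlam0 : 0 ≤ lam := by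
    by_contra h
    push_neg at h
    have h1 : Phi (lam - a) ≤ Phi (-a) := Phi_mono (by linarith)
    have h2 : Phi (lam + a) ≤ Phi a := Phi_mono (by linarith)
    have h3 : Phi (-a) = 1 - Phi a := Phi_neg a
    have : (1:ℝ) ≤ γ := by rw [← hlam]; linarith
    linarith [hγ.2]
  -- the sum inequality for u = t / sqrt n
  set u : ℝ := t / Real.sqrt n with hu
  have hua : |u| ≤ a := by
    rw [hu, abs_div, abs_of_pos hsn, div_le_iff₀ hsn, ha, mul_assoc,
      Real.mul_self_sqrt hn0.le]
    exact ht
  have hsum : Phi (lam - a) + Phi (lam + a) ≤ Phi (lam - u) + Phi (lam + u) := by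
    rcases le_or_gt 0 u with h | h
    · exact Phi_sum_anti hlam0 h (by rwa [abs_of_nonneg h] at hua)
    · have h2 : Phi (lam - a) + Phi (lam + a) ≤ Phi (lam - -u) + Phi (lam + -u) :=
        Phi_sum_anti hlam0 (neg_nonneg.2 h.le) (by rwa [abs_of_neg h] at hua)
      have e1 : lam - -u = lam + u := by ring
      have e2 : lam + -u = lam - u := by ring
      rw [e1, e2] at h2
      linarith
  -- map
  have hmap : Measure.map (fun z : ℝ => Real.sqrt n * z) (gaussianReal 0 1)
      = gaussianReal 0 (n : ℝ≥0) := by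
    rw [gaussianReal_map_const_mul]
    have h1 : (⟨(Real.sqrt n)^2, sq_nonneg _⟩ : ℝ≥0) * 1 = (n:ℝ≥0) :=
      NNReal.coe_injective (by
        push_cast [NNReal.coe_natCast]
        simp [Real.sq_sqrt hn0.le]
        all_goals norm_cast)
    rw [mul_zero]; exact congrArg (gaussianReal 0) h1
  have hsetm : MeasurableSet {s : ℝ | Real.sqrt n * lam < |t + s|} :=
    measurableSet_lt measurable_const (by fun_prop)
  rw [← hmap, Measure.map_apply (by fun_prop) hsetm]
  have hpre : (fun z : ℝ => Real.sqrt n * z) ⁻¹' {s : ℝ | Real.sqrt n * lam < |t + s|}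
      ⊆ Set.Ioi (lam - u) ∪ Set.Iio (-(lam + u)) := by
    intro z hz
    simp only [Set.mem_preimage, Set.mem_setOf_eq, lt_abs] at hz
    rcases hz with h | h
    · left
      simp only [Set.mem_Ioi]
      have h2 : (Real.sqrt n * lam - t) / Real.sqrt n < z := by
        rw [div_lt_iff₀ hsn]
        nlinarith
      calc lam - u = (Real.sqrt n * lam - t)/Real.sqrt n := by rw [hu]; field_simp
        _ < z := h2
    · right
      simp only [Set.mem_Iio]
      have h2 : z < (-(Real.sqrt n * lam) - t) / Real.sqrt n := by
        rw [lt_div_iff₀ hsn]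
        nlinarith
      calc z < (-(Real.sqrt n * lam) - t)/Real.sqrt n := h2
        _ = -(lam + u) := by rw [hu]; field_simp; ring
  calc gaussianReal 0 1 ((fun z : ℝ => Real.sqrt n * z) ⁻¹' {s : ℝ | Real.sqrt n * lam < |t + s|})
      ≤ gaussianReal 0 1 (Set.Ioi (lam - u) ∪ Set.Iio (-(lam + u))) := measure_mono hpre
    _ ≤ gaussianReal 0 1 (Set.Ioi (lam - u)) + gaussianReal 0 1 (Set.Iio (-(lam + u))) :=
        measure_union_le _ _
    _ = ENNReal.ofReal (1 - Phi (lam - u)) + ENNReal.ofReal (Phi (-(lam + u))) := by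
        rw [gr_Ioi, gr_Iio]
    _ ≤ ENNReal.ofReal γ := by
        rw [Phi_neg, ← ENNReal.ofReal_add (by linarith [Phi_le_one (lam - u)])
          (by linarith [Phi_le_one (lam + u)])]
        apply ENNReal.ofReal_le_ofReal
        rw [← hlam]
        linarith

lemma sum_law {Ω : Type*} [MeasurableSpace Ω] (P : Measure Ω) [IsProbabilityMeasure P] {n : ℕ}
    (X : Fin n → Ω → ℝ) (hmeas : ∀ i, Measurable (X i))
    (hindep : iIndepFun X P)
    (hdist : ∀ i, Measure.map (X i) P = gaussianReal 0 1) (s : Finset (Fin n)) :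
    Measure.map (fun ω => ∑ i ∈ s, X i ω) P = gaussianReal 0 (s.card : ℝ≥0) := by
  induction s using Finset.induction with
  | empty =>
    simp only [Finset.sum_empty, Finset.card_empty, Nat.cast_zero, gaussianReal_zero_var]
    rw [Measure.map_const P (0:ℝ), measure_univ, one_smul]
  | insert i s hi ih =>
    have hSmeas : Measurable (fun ω => ∑ j ∈ s, X j ω) := by
      exact Finset.measurable_sum s fun j _ => hmeas j
    have hS : IndepFun (fun ω => ∑ j ∈ s, X j ω) (X i) P := by
      have := hindep.indepFun_finsetSum_of_notMem hmeas hi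
      simpa [Finset.sum_fn] using this
    have hpair : Measure.map (fun ω => ((∑ j ∈ s, X j ω), X i ω)) P
        = (gaussianReal 0 (s.card : ℝ≥0)).prod (gaussianReal 0 1) := by
      rw [← ih, ← hdist i]
      exact (indepFun_iff_map_prod_eq_prod_map_map hSmeas.aemeasurable
        (hmeas i).aemeasurable).mp hS
    have hfun : (fun ω => ∑ j ∈ insert i s, X j ω)
        = (fun p : ℝ × ℝ => p.1 + p.2) ∘ (fun ω => ((∑ j ∈ s, X j ω), X i ω)) := by
      funext ω
      simp [Finset.sum_insert hi, add_comm]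
    rw [hfun, ← Measure.map_map measurable_add (hSmeas.prodMk (hmeas i)), hpair]
    rcases s.eq_empty_or_nonempty with rfl | hne
    · simp only [Finset.card_empty, Nat.cast_zero, gaussianReal_zero_var,
        Measure.dirac_prod, Measure.map_map measurable_add (measurable_prodMk_left),
        Finset.card_insert_of_notMem hi]
      have : (fun p : ℝ × ℝ => p.1 + p.2) ∘ (Prod.mk (0:ℝ)) = id := by
        funext y; simp
      rw [this, Measure.map_id]
      norm_num
    · have hc : (s.card : ℝ≥0) ≠ 0 := by
        simp [Finset.card_eq_zero, hne.ne_empty]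
      rw [gaussianReal_conv hc one_ne_zero, Finset.card_insert_of_notMem hi]
      congr 1
      push_cast
      ring

/-- the RDT test has level γ for the mean testing problem: conditionally
on |Θ̄_n| ≤ τ, the probability that it rejects is at most γ. -/
theorem stmt14 {Ω : Type*} [MeasurableSpace Ω] (P : Measure Ω) [IsProbabilityMeasure P]
    (γ τ : ℝ) (hγ : γ ∈ Set.Ioo (0 : ℝ) 1) (hτ : 0 ≤ τ) (n : ℕ) (hn : 1 ≤ n)
    (X : Fin n → Ω → ℝ) (hmeas : ∀ i, Measurable (X i))
    (hindep : iIndepFun X P)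
    (hdist : ∀ i, Measure.map (X i) P = gaussianReal 0 1)
    (Θ : Ω → Fin n → ℝ) (hΘmeas : Measurable Θ)
    (hΘX : IndepFun Θ (fun ω i => X i ω) P)
    (hcond : P {ω | |(∑ i, Θ ω i) / n| ≤ τ} ≠ 0)
    (lam : ℝ)
    (hlam : 2 - Phi (lam - τ * Real.sqrt n) - Phi (lam + τ * Real.sqrt n) = γ) :
    P ({ω | Real.sqrt n * lam < |∑ i, (Θ ω i + X i ω)|} ∩
        {ω | |(∑ i, Θ ω i) / n| ≤ τ}) / P {ω | |(∑ i, Θ ω i) / n| ≤ τ} ≤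
      ENNReal.ofReal γ := by
  have hn0 : (0:ℝ) < n := by exact_mod_cast hn
  set T : Ω → ℝ := fun ω => ∑ i, Θ ω i with hT
  set S : Ω → ℝ := fun ω => ∑ i, X i ω with hS
  have hTmeas : Measurable T := Finset.measurable_sum _ fun i _ =>
    (measurable_pi_apply i).comp hΘmeas
  have hSmeas : Measurable S := Finset.measurable_sum _ fun i _ => hmeas i
  have hSlaw : Measure.map S P = gaussianReal 0 (n : ℝ≥0) := by
    have := sum_law P X hmeas hindep hdist Finset.univ
    simpa [Finset.card_univ] using this
  have msum : Measurable (fun v : Fin n → ℝ => ∑ i, v i) :=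
    Finset.measurable_sum _ fun i _ => measurable_pi_apply i
  have hTS : IndepFun T S P := by
    have := hΘX.comp msum msum
    exact this
  have hjoint : Measure.map (fun ω => (T ω, S ω)) P
      = (Measure.map T P).prod (gaussianReal 0 (n : ℝ≥0)) := by
    rw [← hSlaw]
    exact (indepFun_iff_map_prod_eq_prod_map_map hTmeas.aemeasurable
      hSmeas.aemeasurable).mp hTS
  set C : Set (ℝ × ℝ) :=
    {p : ℝ × ℝ | Real.sqrt n * lam < |p.1 + p.2| ∧ |p.1 / (n:ℝ)| ≤ τ} with hC
  have hCmeas : MeasurableSet C := by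
    have h1 : MeasurableSet {p : ℝ × ℝ | Real.sqrt n * lam < |p.1 + p.2|} :=
      measurableSet_lt measurable_const
        (show Measurable fun p : ℝ × ℝ => |p.1 + p.2| by fun_prop)
    have h2 : MeasurableSet {p : ℝ × ℝ | |p.1 / (n:ℝ)| ≤ τ} :=
      measurableSet_le (show Measurable fun p : ℝ × ℝ => |p.1 / (n:ℝ)| by fun_prop)
        measurable_const
    exact h1.inter h2
  have hevent : {ω | Real.sqrt n * lam < |∑ i, (Θ ω i + X i ω)|} ∩
      {ω | |(∑ i, Θ ω i) / n| ≤ τ} = (fun ω => (T ω, S ω)) ⁻¹' C := by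
    ext ω
    simp only [Set.mem_inter_iff, Set.mem_setOf_eq, Set.mem_preimage, hC, hT, hS,
      Finset.sum_add_distrib]
  set B : Set ℝ := {t : ℝ | |t / (n:ℝ)| ≤ τ} with hB
  have hBmeas : MeasurableSet B :=
    measurableSet_le (show Measurable fun t : ℝ => |t / (n:ℝ)| by fun_prop) measurable_const
  have hsec : ∀ t : ℝ, gaussianReal 0 (n:ℝ≥0) (Prod.mk t ⁻¹' C)
      ≤ B.indicator (fun _ => ENNReal.ofReal γ) t := by
    intro t
    by_cases htB : t ∈ B
    · rw [Set.indicator_of_mem htB]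
      have hpre : Prod.mk t ⁻¹' C ⊆ {s : ℝ | Real.sqrt n * lam < |t + s|} := by
        intro s hs
        exact hs.1
      refine le_trans (measure_mono hpre) (tail_bound hγ hτ hn hlam ?_)
      have := htB
      rw [hB, Set.mem_setOf_eq, abs_div, abs_of_pos hn0, div_le_iff₀ hn0] at this
      linarith
    · rw [Set.indicator_of_notMem htB]
      have hpre : Prod.mk t ⁻¹' C = ∅ := by
        ext s
        simp only [Set.mem_preimage, hC, Set.mem_setOf_eq, Set.mem_empty_iff_false,
          iff_false, not_and]
        intro _
        exact fun h => htB h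
      rw [hpre]
      simp
  have hbound : P ({ω | Real.sqrt n * lam < |∑ i, (Θ ω i + X i ω)|} ∩
      {ω | |(∑ i, Θ ω i) / n| ≤ τ}) ≤ ENNReal.ofReal γ * P {ω | |(∑ i, Θ ω i) / n| ≤ τ} := by
    rw [hevent, ← Measure.map_apply (hTmeas.prodMk hSmeas) hCmeas, hjoint,
      Measure.prod_apply hCmeas]
    calc ∫⁻ t, gaussianReal 0 (n:ℝ≥0) (Prod.mk t ⁻¹' C) ∂(Measure.map T P)
        ≤ ∫⁻ t, B.indicator (fun _ => ENNReal.ofReal γ) t ∂(Measure.map T P) :=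
          lintegral_mono hsec
      _ = ENNReal.ofReal γ * (Measure.map T P) B := by
          rw [lintegral_indicator hBmeas, setLIntegral_const]
      _ = ENNReal.ofReal γ * P {ω | |(∑ i, Θ ω i) / n| ≤ τ} := by
          rw [Measure.map_apply hTmeas hBmeas]
          rfl
  exact ENNReal.div_le_of_le_mul hbound
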